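/- Let d ≥ 1, let n = (n_1,…,n_d) be nonnegative integer degrees, let U = [α_1,β_1] × ⋯ × [α_d,β_d] with α_j < β_j for each j, and let c : Π_j {0,…,n_j} → ℝ. Suppose φ(x) = Σ_i c_i · Π_{j=1}^{d} b_{i_j}^{n_j,[α_j,β_j]}(x_j) is coefficient monotone increasing in direction k, i.e., c_i ≤ c_{i+e_k} for all multi-indices i with i_k < n_k. Then φ is nondecreasing in the k-th coordinate on U: for every x ∈ U and every α_k ≤ s ≤ t ≤ β_k, φ(x with k-th coordinate replaced by s) ≤ φ(x with k-th coordinate replaced by t). -/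

import Mathlib

/-- One-dimensional Bernstein basis function of degree `η`, index `ℓ`, on `[α, β]`. -/
noncomputable def bern (η ℓ : ℕ) (α β x : ℝ) : ℝ :=
  (η.choose ℓ : ℝ) / (β - α) ^ η * (β - x) ^ (η - ℓ) * (x - α) ^ ℓ

lemma bern_nonneg {η ℓ : ℕ} {α β x : ℝ} (hαβ : α < β) (h1 : α ≤ x) (h2 : x ≤ β) :
    0 ≤ bern η ℓ α β x := by
  have h3 : (0:ℝ) < β - α := by linarith
  have h4 : (0:ℝ) ≤ β - x := by linarith
  have h5 : (0:ℝ) ≤ x - α := by linarith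
  unfold bern
  positivity

/-- Univariate key lemma: a Bernstein polynomial with nondecreasing coefficients is
nondecreasing on `[α, β]`. -/
lemma bern_key (η : ℕ) (C : ℕ → ℝ) (hC : ∀ ℓ, ℓ < η → C ℓ ≤ C (ℓ + 1))
    (α β s t : ℝ) (hαβ : α < β) (hs : α ≤ s) (hst : s ≤ t) (ht : t ≤ β) :
    ∑ ℓ ∈ Finset.range (η + 1), C ℓ * bern η ℓ α β s ≤
      ∑ ℓ ∈ Finset.range (η + 1), C ℓ * bern η ℓ α β t := by
  have hC' : ∀ a b, a + b ≤ η → C a ≤ C (a + b) := by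
    intro a b
    induction b with
    | zero => simp
    | succ m ih =>
      intro h
      have h1 : a + m ≤ η := by omega
      have h2 : a + m < η := by omega
      calc C a ≤ C (a + m) := ih h1
        _ ≤ C (a + m + 1) := hC _ h2
        _ = C (a + (m + 1)) := by ring_nf
  set p := s - α with hp_def
  set q := t - s with hq_def
  set r := β - t with hr_def
  have hp : 0 ≤ p := by rw [hp_def]; linarith
  have hq : 0 ≤ q := by rw [hq_def]; linarith
  have hr : 0 ≤ r := by rw [hr_def]; linarith
  have hba0 : (0:ℝ) < β - α := by linarith
  have hba : (0:ℝ) < (β - α) ^ η := by positivity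
  set W : ℕ → ℕ → ℝ := fun a b =>
    (η.choose a : ℝ) * ((η - a).choose b : ℝ) / (β - α) ^ η *
      (p ^ a * q ^ b * r ^ (η - a - b)) with hW_def
  have hW : ∀ a b, 0 ≤ W a b := by
    intro a b
    have h1 : (0:ℝ) ≤ (η.choose a : ℝ) * ((η - a).choose b : ℝ) := by positivity
    have h2 : (0:ℝ) ≤ p ^ a * q ^ b * r ^ (η - a - b) := by positivity
    exact mul_nonneg (div_nonneg h1 hba.le) h2
  have hseq : ∑ ℓ ∈ Finset.range (η + 1), C ℓ * bern η ℓ α β s =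
      ∑ a ∈ Finset.range (η + 1), ∑ b ∈ Finset.range (η - a + 1), C a * W a b := by
    refine Finset.sum_congr rfl fun a ha => ?_
    have h1 : β - s = q + r := by rw [hq_def, hr_def]; ring
    have h2 : bern η a α β s = ∑ b ∈ Finset.range (η - a + 1), W a b := by
      rw [bern, h1, ← hp_def, add_pow, Finset.mul_sum, Finset.sum_mul]
      refine Finset.sum_congr rfl fun b hb => ?_
      rw [hW_def]
      ring
    rw [h2, Finset.mul_sum]
  have hteq : ∑ ℓ ∈ Finset.range (η + 1), C ℓ * bern η ℓ α β t =
      ∑ a ∈ Finset.range (η + 1), ∑ b ∈ Finset.range (η - a + 1), C (a + b) * W a b := by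
    have step0 : ∑ ℓ ∈ Finset.range (η + 1), C ℓ * bern η ℓ α β t =
        ∑ ℓ ∈ Finset.range (η + 1), ∑ a ∈ Finset.range (ℓ + 1),
          C ℓ * ((η.choose ℓ : ℝ) * (ℓ.choose a : ℝ) / (β - α) ^ η *
            (p ^ a * q ^ (ℓ - a) * r ^ (η - ℓ))) := by
      refine Finset.sum_congr rfl fun ℓ hℓ => ?_
      have h1 : t - α = p + q := by rw [hp_def, hq_def]; ring
      rw [bern, h1, ← hr_def, add_pow, Finset.mul_sum, Finset.mul_sum]
      refine Finset.sum_congr rfl fun a ha => ?_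
      ring
    rw [step0, Finset.sum_sigma', Finset.sum_sigma']
    refine Finset.sum_nbij' (fun x => ⟨x.2, x.1 - x.2⟩) (fun y => ⟨y.1 + y.2, y.1⟩)
      ?_ ?_ ?_ ?_ ?_
    · intro x hx
      simp only [Finset.mem_sigma, Finset.mem_range] at hx ⊢
      omega
    · intro y hy
      simp only [Finset.mem_sigma, Finset.mem_range] at hy ⊢
      omega
    · intro x hx
      obtain ⟨ℓ, a⟩ := x
      simp only [Finset.mem_sigma, Finset.mem_range] at hx
      simp only [Sigma.mk.inj_iff, heq_eq_eq]
      constructor <;> first | trivial | omega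
    · intro y hy
      obtain ⟨a, b⟩ := y
      simp only [Sigma.mk.inj_iff, heq_eq_eq]
      constructor <;> first | trivial | omega
    · intro x hx
      obtain ⟨ℓ, a⟩ := x
      simp only [Finset.mem_sigma, Finset.mem_range] at hx
      dsimp only
      obtain ⟨hℓ, ha⟩ := hx
      have ha' : a ≤ ℓ := by omega
      have hℓ' : ℓ ≤ η := by omega
      have hch : η.choose ℓ * ℓ.choose a = η.choose a * (η - a).choose (ℓ - a) :=
        Nat.choose_mul ha'
      have hadd : a + (ℓ - a) = ℓ := by omega
      have hexp : η - a - (ℓ - a) = η - ℓ := by omega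
      simp only [hW_def, hadd, hexp]
      have hch' : (η.choose ℓ : ℝ) * (ℓ.choose a : ℝ) =
          (η.choose a : ℝ) * ((η - a).choose (ℓ - a) : ℝ) := by
        exact_mod_cast congrArg (Nat.cast : ℕ → ℝ) hch
      calc C ℓ * ((η.choose ℓ : ℝ) * (ℓ.choose a : ℝ) / (β - α) ^ η *
            (p ^ a * q ^ (ℓ - a) * r ^ (η - ℓ)))
          = C ℓ * ((η.choose a : ℝ) * ((η - a).choose (ℓ - a) : ℝ) / (β - α) ^ η *
            (p ^ a * q ^ (ℓ - a) * r ^ (η - ℓ))) := by rw [hch']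
        _ = _ := by ring
  rw [hseq, hteq]
  refine Finset.sum_le_sum fun a ha => Finset.sum_le_sum fun b hb => ?_
  simp only [Finset.mem_range] at ha hb
  exact mul_le_mul_of_nonneg_right (hC' a b (by omega)) (hW a b)

/-- A tensor-product Bernstein polynomial that is coefficient monotone increasing in
direction `k` is nondecreasing in the `k`-th coordinate on the reference box. -/
theorem tensor_bernstein_coeff_monotone (d : ℕ) (hd : 1 ≤ d) (n : Fin d → ℕ)
    (α β : Fin d → ℝ) (hαβ : ∀ j, α j < β j)
    (c : (Fin d → ℕ) → ℝ) (φ : (Fin d → ℝ) → ℝ)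
    (hφ : ∀ x, φ x = ∑ i ∈ Finset.Iic n, c i * ∏ j, bern (n j) (i j) (α j) (β j) (x j))
    (k : Fin d) (e : Fin d → ℕ) (he : e = fun j => if j = k then 1 else 0)
    (hc : ∀ i ∈ Finset.Iic n, i k < n k → c i ≤ c (i + e)) :
    ∀ x : Fin d → ℝ, (∀ j, x j ∈ Set.Icc (α j) (β j)) →
      ∀ s t : ℝ, α k ≤ s → s ≤ t → t ≤ β k →
        φ (Function.update x k s) ≤ φ (Function.update x k t) := by
  intro x hx s t hs hst ht
  -- the "other coordinates" product
  set P : (Fin d → ℕ) → ℝ := fun i =>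
    ∏ j ∈ Finset.univ.erase k, bern (n j) (i j) (α j) (β j) (x j) with hP_def
  have hPnn : ∀ i, 0 ≤ P i := by
    intro i
    refine Finset.prod_nonneg fun j hj => ?_
    exact bern_nonneg (hαβ j) (hx j).1 (hx j).2
  -- fiberwise coefficients
  set C : ℕ → ℝ := fun ℓ =>
    ∑ i ∈ (Finset.Iic n).filter (fun i => i k = ℓ), c i * P i with hC_def
  -- rewrite φ (update x k u) as a univariate Bernstein sum
  have key : ∀ u : ℝ, φ (Function.update x k u) =
      ∑ ℓ ∈ Finset.range (n k + 1), C ℓ * bern (n k) ℓ (α k) (β k) u := by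
    intro u
    rw [hφ]
    have hsplit : ∀ i : Fin d → ℕ,
        (∏ j, bern (n j) (i j) (α j) (β j) (Function.update x k u j)) =
          bern (n k) (i k) (α k) (β k) u * P i := by
      intro i
      rw [← Finset.mul_prod_erase Finset.univ _ (Finset.mem_univ k)]
      rw [Function.update_self]
      congr 1
      refine Finset.prod_congr rfl fun j hj => ?_
      rw [Function.update_of_ne (Finset.mem_erase.mp hj).1]
    have hmaps : ∀ i ∈ Finset.Iic n, i k ∈ Finset.range (n k + 1) := by
      intro i hi
      rw [Finset.mem_range]
      have h2 : i k ≤ n k := (Pi.le_def.mp (Finset.mem_Iic.mp hi)) k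
      omega
    rw [← Finset.sum_fiberwise_of_maps_to hmaps]
    refine Finset.sum_congr rfl fun ℓ hℓ => ?_
    rw [hC_def, Finset.sum_mul]
    refine Finset.sum_congr rfl fun i hi => ?_
    have hik : i k = ℓ := (Finset.mem_filter.mp hi).2
    rw [hsplit, hik]
    ring
  -- coefficient monotonicity
  have hCmono : ∀ ℓ, ℓ < n k → C ℓ ≤ C (ℓ + 1) := by
    intro ℓ hℓ
    rw [hC_def]
    have step1 : ∑ i ∈ (Finset.Iic n).filter (fun i => i k = ℓ), c i * P i ≤
        ∑ i ∈ (Finset.Iic n).filter (fun i => i k = ℓ), c (i + e) * P i := by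
      refine Finset.sum_le_sum fun i hi => ?_
      obtain ⟨hi1, hi2⟩ := Finset.mem_filter.mp hi
      have hi2' : i k = ℓ := hi2
      have : i k < n k := by omega
      exact mul_le_mul_of_nonneg_right (hc i hi1 this) (hPnn i)
    have step2 : ∑ i ∈ (Finset.Iic n).filter (fun i => i k = ℓ), c (i + e) * P i =
        ∑ i ∈ (Finset.Iic n).filter (fun i => i k = ℓ + 1), c i * P i := by
      refine Finset.sum_nbij' (fun i => i + e) (fun i => i - e) ?_ ?_ ?_ ?_ ?_
      · intro i hi
        obtain ⟨hi1, hi2⟩ := Finset.mem_filter.mp hi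
        have hi2' : i k = ℓ := hi2
        have hle : ∀ j, i j ≤ n j := Pi.le_def.mp (Finset.mem_Iic.mp hi1)
        refine Finset.mem_filter.mpr ⟨Finset.mem_Iic.mpr fun j => ?_, ?_⟩
        · have := hle j
          rcases eq_or_ne j k with h | h <;> simp [he, h, Pi.add_apply] <;> omega
        · show i k + e k = ℓ + 1
          simp [he] <;> omega
      · intro i hi
        obtain ⟨hi1, hi2⟩ := Finset.mem_filter.mp hi
        have hi2' : i k = ℓ + 1 := hi2
        have hle : ∀ j, i j ≤ n j := Pi.le_def.mp (Finset.mem_Iic.mp hi1)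
        refine Finset.mem_filter.mpr ⟨Finset.mem_Iic.mpr fun j => ?_, ?_⟩
        · have := hle j
          rcases eq_or_ne j k with h | h <;> simp [he, h, Pi.sub_apply] <;> omega
        · show i k - e k = ℓ
          simp [he] <;> omega
      · intro i hi
        funext j
        show i j + e j - e j = i j
        omega
      · intro i hi
        obtain ⟨hi1, hi2⟩ := Finset.mem_filter.mp hi
        have hi2' : i k = ℓ + 1 := hi2
        funext j
        show i j - e j + e j = i j
        rcases eq_or_ne j k with h | h <;> simp [he, h] <;> omega
      · intro i hi
        congr 1
        rw [hP_def]
        refine Finset.prod_congr rfl fun j hj => ?_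
        have hjk : j ≠ k := (Finset.mem_erase.mp hj).1
        simp only [Pi.add_apply, he, if_neg hjk, Nat.add_zero]
    calc (∑ i ∈ (Finset.Iic n).filter (fun i => i k = ℓ), c i * P i)
        ≤ ∑ i ∈ (Finset.Iic n).filter (fun i => i k = ℓ), c (i + e) * P i := step1
      _ = ∑ i ∈ (Finset.Iic n).filter (fun i => i k = ℓ + 1), c i * P i := step2
  rw [key s, key t]
  exact bern_key (n k) C hCmono (α k) (β k) s t (hαβ k) hs hst ht
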